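/- arXiv:1907.02296 — 5 statements merged into one kernel-verified Lean document; each statement's English description precedes it below -/
import Mathlib

section
/- Independence of local runs: if dom(a) ∩ dom(b) = ∅ and (q,v) =ab=> (q',v') is a local run, then (q,v) =ba=> (q',v') is also a local run (reaching the same state and the same local valuation). Moreover, if (q,v) =a=> (q_a,v_a) and (q,v) =b=> (q_b,v_b) are local runs, then there exist q_ab, v_ab with a local run (q,v) =ab=> (q_ab, v_ab). -/
open Classical

/-- Comparison operators appearing in guards `x ~ c`. -/
inductive Cmp | lt | le | eq | ge | gt

def Cmp.sat : Cmp → ℝ → ℤ → Prop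
  | .lt, r, c => r < (c : ℝ)
  | .le, r, c => r ≤ (c : ℝ)
  | .eq, r, c => r = (c : ℝ)
  | .ge, r, c => (c : ℝ) ≤ r
  | .gt, r, c => (c : ℝ) < r

/-- A guard: a finite conjunction of constraints `x ~ c` on clocks. -/
abbrev Guard (Clock : Type) := List (Clock × Cmp × ℤ)

/-- A difference constraint `y₁ - y₂ ◁ c` over variables `V`;
the boolean is `true` for strict `<` and `false` for `≤`. -/
abbrev DiffConstraint (V : Type) := V × V × Bool × ℤ

/-- Satisfaction of a difference constraint. -/
def csat {V : Type} (v : V → ℝ) (c : DiffConstraint V) : Prop :=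
  if c.2.2.1 then v c.1 - v c.2.1 < (c.2.2.2 : ℝ) else v c.1 - v c.2.1 ≤ (c.2.2.2 : ℝ)

/-- A network of timed automata: `k` processes, each owning its clocks and
locations; each action `b` has a domain `dom b` of synchronizing processes, and
for each process in the domain a set of `b`-transitions (location, guard, reset
set, target location), whose guards and resets only mention own clocks. -/
structure Network where
  k : ℕ
  kpos : 0 < k
  Clock : Type
  [clockFin : Fintype Clock]
  owner : Clock → Fin k
  Act : Type
  dom : Act → Finset (Fin k)
  Loc : Fin k → Type
  init : ∀ p, Loc p
  Trans : ∀ (_ : Act) (p : Fin k), Set (Loc p × Guard Clock × Set Clock × Loc p)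
  trans_wf : ∀ b p tr, tr ∈ Trans b p →
    (∀ c ∈ tr.2.1, owner c.1 = p) ∧ (∀ x ∈ tr.2.2.1, owner x = p)

attribute [instance] Network.clockFin

namespace Network

variable (N : Network)

/-- Global (discrete) states of the network. -/
abbrev State := ∀ p, N.Loc p

/-- Variables of local valuations: offset variables `x̃` and reference clocks `t_p`. -/
abbrev LVar := N.Clock ⊕ Fin N.k

/-- Variables of global valuations: offset variables `x̃` and the global reference clock `t`. -/
abbrev GVar := N.Clock ⊕ Unit

abbrev LVal := N.LVar → ℝ

abbrev GVal := N.GVar → ℝ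

/-- A local valuation: nonnegative, and each offset is below the owner's reference clock. -/
def IsLVal (v : N.LVal) : Prop :=
  (∀ y, 0 ≤ v y) ∧ ∀ x : N.Clock, v (.inl x) ≤ v (.inr (N.owner x))

/-- A global valuation: nonnegative, and each offset is below the global time `t`. -/
def IsGVal (v : N.GVal) : Prop :=
  (∀ y, 0 ≤ v y) ∧ ∀ x : N.Clock, v (.inl x) ≤ v (.inr ())

/-- Satisfaction of a guard by a local valuation: the value of clock `x` is
`v t_p - v x̃` where `p` owns `x`. -/
def lgsat (v : N.LVal) (g : Guard N.Clock) : Prop :=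
  ∀ c ∈ g, Cmp.sat c.2.1 (v (.inr (N.owner c.1)) - v (.inl c.1)) c.2.2

/-- Satisfaction of a guard by a global valuation: the value of clock `x` is `v t - v x̃`. -/
def ggsat (v : N.GVal) (g : Guard N.Clock) : Prop :=
  ∀ c ∈ g, Cmp.sat c.2.1 (v (.inr ()) - v (.inl c.1)) c.2.2

/-- Global delay: only the global reference clock advances. -/
def gdelay (v : N.GVal) (δ : ℝ) : N.GVal :=
  fun y => match y with
    | .inl x => v (.inl x)
    | .inr _ => v (.inr ()) + δ

/-- `v'` is obtained from `v` by a (finite) sequence of local delays; equivalently,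
each reference clock advances by some nonnegative amount, offsets are unchanged. -/
def ldelayed (v v' : N.LVal) : Prop :=
  ∃ δ : Fin N.k → ℝ, (∀ p, 0 ≤ δ p) ∧
    v' = fun y => match y with
      | .inl x => v (.inl x)
      | .inr p => v (.inr p) + δ p

/-- Reset of the clocks in `R` in a global valuation. -/
noncomputable def greset (R : Set N.Clock) (v : N.GVal) : N.GVal :=
  fun y => match y with
    | .inl x => if x ∈ R then v (.inr ()) else v (.inl x)
    | .inr u => v (.inr u)

/-- Reset of the clocks in `R` in a local valuation: `x̃` is set to the local
time of the process owning `x`. -/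
noncomputable def lreset (R : Set N.Clock) (v : N.LVal) : N.LVal :=
  fun y => match y with
    | .inl x => if x ∈ R then v (.inr (N.owner x)) else v (.inl x)
    | .inr p => v (.inr p)

/-- Global action step on action `b`. -/
def gact (b : N.Act) (c c' : N.State × N.GVal) : Prop :=
  ∃ tr : ∀ p, p ∈ N.dom b → N.Loc p × Guard N.Clock × Set N.Clock × N.Loc p,
    (∀ p (h : p ∈ N.dom b),
      tr p h ∈ N.Trans b p ∧ (tr p h).1 = c.1 p ∧ (tr p h).2.2.2 = c'.1 p) ∧
    (∀ p, p ∉ N.dom b → c'.1 p = c.1 p) ∧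
    (∀ p (h : p ∈ N.dom b), N.ggsat c.2 (tr p h).2.1) ∧
    c'.2 = N.greset {x | ∃ p h, x ∈ (tr p h).2.2.1} c.2

/-- Local action step on action `b`: additionally the reference clocks of the
processes in `dom b` must agree. -/
def lact (b : N.Act) (c c' : N.State × N.LVal) : Prop :=
  ∃ tr : ∀ p, p ∈ N.dom b → N.Loc p × Guard N.Clock × Set N.Clock × N.Loc p,
    (∀ p (h : p ∈ N.dom b),
      tr p h ∈ N.Trans b p ∧ (tr p h).1 = c.1 p ∧ (tr p h).2.2.2 = c'.1 p) ∧
    (∀ p, p ∉ N.dom b → c'.1 p = c.1 p) ∧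
    (∀ p ∈ N.dom b, ∀ p' ∈ N.dom b, c.2 (.inr p) = c.2 (.inr p')) ∧
    (∀ p (h : p ∈ N.dom b), N.lgsat c.2 (tr p h).2.1) ∧
    c'.2 = N.lreset {x | ∃ p h, x ∈ (tr p h).2.2.1} c.2

/-- Global run on a word of actions: delays and action steps alternate,
starting and ending with a (possibly zero) delay. -/
inductive GRun : List N.Act → (N.State × N.GVal) → (N.State × N.GVal) → Prop
  | nil {q v} (δ : ℝ) (hδ : 0 ≤ δ) : GRun [] (q, v) (q, N.gdelay v δ)
  | cons {b u q v c1 c2} (δ : ℝ) (hδ : 0 ≤ δ)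
      (hb : N.gact b (q, N.gdelay v δ) c1) (h : GRun u c1 c2) :
      GRun (b :: u) (q, v) c2

/-- Local run on a word of actions: sequences of local delays and local action
steps alternate. -/
inductive LRun : List N.Act → (N.State × N.LVal) → (N.State × N.LVal) → Prop
  | nil {q v v'} (hd : N.ldelayed v v') : LRun [] (q, v) (q, v')
  | cons {b u q v v1 c1 c2} (hd : N.ldelayed v v1)
      (hb : N.lact b (q, v1) c1) (h : LRun u c1 c2) :
      LRun (b :: u) (q, v) c2

/-- Local run recording, for each action, its execution time: the common value
of the reference clocks of `dom b` when the step is taken. -/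
inductive LRunT : List (N.Act × ℝ) → (N.State × N.LVal) → (N.State × N.LVal) → Prop
  | nil {q v v'} (hd : N.ldelayed v v') : LRunT [] (q, v) (q, v')
  | cons {b θ u q v v1 c1 c2} (hd : N.ldelayed v v1)
      (hb : N.lact b (q, v1) c1) (hθ : ∀ p ∈ N.dom b, v1 (.inr p) = θ)
      (h : LRunT u c1 c2) :
      LRunT ((b, θ) :: u) (q, v) c2

/-- Equivalence of action sequences: generated by swapping adjacent actions
with disjoint domains. -/
inductive equiv : List N.Act → List N.Act → Prop
  | swap (u w : List N.Act) (a b : N.Act) (h : Disjoint (N.dom a) (N.dom b)) :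
      equiv (u ++ a :: b :: w) (u ++ b :: a :: w)
  | refl (u : List N.Act) : equiv u u
  | trans {u v w} : equiv u v → equiv v w → equiv u w

/-- A local valuation is synchronized if all reference clocks agree. -/
def Synchronized (v : N.LVal) : Prop :=
  ∀ p p' : Fin N.k, v (.inr p) = v (.inr p')

/-- The global valuation associated to a (synchronized) local valuation. -/
def toGlobal (v : N.LVal) : N.GVal :=
  fun y => match y with
    | .inl x => v (.inl x)
    | .inr _ => v (.inr ⟨0, N.kpos⟩)

/-- The synchronized local valuation associated to a global valuation. -/
def toLocal (v : N.GVal) : N.LVal :=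
  fun y => match y with
    | .inl x => v (.inl x)
    | .inr _ => v (.inr ())

/-- The synchronized valuations of a set of local valuations. -/
def syncSet (S : Set N.LVal) : Set N.LVal := {v ∈ S | N.Synchronized v}

/-- The set of local valuations defined by a list of difference constraints. -/
def lzset (L : List (DiffConstraint N.LVar)) : Set N.LVal :=
  {v | N.IsLVal v ∧ ∀ c ∈ L, csat v c}

/-- The set of global valuations defined by a list of difference constraints. -/
def gzset (L : List (DiffConstraint N.GVar)) : Set N.GVal :=
  {v | N.IsGVal v ∧ ∀ c ∈ L, csat v c}

/-- Local zones: sets of local valuations definable by difference constraints. -/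
def IsLZone (S : Set N.LVal) : Prop := ∃ L, S = N.lzset L

/-- Global zones: sets of global valuations definable by difference constraints. -/
def IsGZone (S : Set N.GVal) : Prop := ∃ L, S = N.gzset L

/-- Local-time elapse of a set of local valuations. -/
def lelapse (S : Set N.LVal) : Set N.LVal := {v' | ∃ v ∈ S, N.ldelayed v v'}

/-- Global time elapse of a set of global valuations. -/
def gelapse (S : Set N.GVal) : Set N.GVal :=
  {v' | ∃ v ∈ S, ∃ δ, 0 ≤ δ ∧ v' = N.gdelay v δ}

/-- Local zone graph step on action `b`:
`Z' = local-elapse([R](Z ∩ Z_g ∩ Z_sync))`, required nonempty. -/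
def lzstep (b : N.Act) (c c' : N.State × Set N.LVal) : Prop :=
  ∃ tr : ∀ p, p ∈ N.dom b → N.Loc p × Guard N.Clock × Set N.Clock × N.Loc p,
    (∀ p (h : p ∈ N.dom b),
      tr p h ∈ N.Trans b p ∧ (tr p h).1 = c.1 p ∧ (tr p h).2.2.2 = c'.1 p) ∧
    (∀ p, p ∉ N.dom b → c'.1 p = c.1 p) ∧
    c'.2 = N.lelapse ((N.lreset {x | ∃ p h, x ∈ (tr p h).2.2.1}) ''
      (c.2 ∩ {v | ∀ p (h : p ∈ N.dom b), N.lgsat v (tr p h).2.1}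
           ∩ {v | ∀ p ∈ N.dom b, ∀ p' ∈ N.dom b, v (.inr p) = v (.inr p')})) ∧
    (c'.2).Nonempty

/-- Sequence of local zone graph steps along a word. -/
inductive LZRun : List N.Act → (N.State × Set N.LVal) → (N.State × Set N.LVal) → Prop
  | nil (c) : LZRun [] c c
  | cons {b u c c1 c2} (hb : N.lzstep b c c1) (h : LZRun u c1 c2) :
      LZRun (b :: u) c c2

/-- The initial (discrete) state of the network. -/
def initState : N.State := N.init

/-- The initial global valuation: everything is `0`. -/
def gvalInit : N.GVal := fun _ => 0

/-- The initial local valuation: everything is `0`. -/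
def lvalInit : N.LVal := fun _ => 0

/-- The initial node's zone in the local zone graph. -/
def lzoneInit : Set N.LVal := N.lelapse {N.lvalInit}

/-- State `q` is reachable in the global-time semantics. -/
def GReach (q : N.State) : Prop :=
  ∃ u v, N.GRun u (N.initState, N.gvalInit) (q, v)

/-- State `q` is reachable in the local-time semantics. -/
def LReach (q : N.State) : Prop :=
  ∃ u v, N.LRun u (N.initState, N.lvalInit) (q, v)

/-- Time-abstract simulation between global valuations. -/
def TASim (sim : N.GVal → N.GVal → Prop) : Prop :=
  ∀ v1 v2, sim v1 v2 → ∀ q b δ1 q' v1', 0 ≤ δ1 →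
    N.gact b (q, N.gdelay v1 δ1) (q', v1') →
    ∃ δ2, 0 ≤ δ2 ∧ ∃ v2', N.gact b (q, N.gdelay v2 δ2) (q', v2') ∧ sim v1' v2'

end Network

/-- A local sync graph over a network `N`, based on an abstraction `abs` over
global zones: a subgraph of the local zone graph with covered/uncovered nodes,
satisfying conditions C0–C4. -/
structure SyncGraph (N : Network) (abs : Set N.GVal → Set N.GVal) where
  nodes : Set (N.State × Set N.LVal)
  covered : N.State × Set N.LVal → Prop
  edges : (N.State × Set N.LVal) → (N.State × Set N.LVal) → Prop
  edges_mem : ∀ s s', edges s s' → s ∈ nodes ∧ s' ∈ nodes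
  edges_lzg : ∀ s s', edges s s' → ∃ b, N.lzstep b s s'
  init_mem : (N.initState, N.lzoneInit) ∈ nodes
  init_unc : ¬ covered (N.initState, N.lzoneInit)
  reach : ∀ s ∈ nodes, Relation.ReflTransGen edges (N.initState, N.lzoneInit) s
  unc_succ : ∀ s ∈ nodes, ¬ covered s → ∀ b s', N.lzstep b s s' → edges s s'
  cov_sub : ∀ s ∈ nodes, covered s → ∃ s' ∈ nodes, ¬ covered s' ∧ s.1 = s'.1 ∧
    N.toGlobal '' N.syncSet s.2 ⊆ abs (N.toGlobal '' N.syncSet s'.2)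
  cov_nosucc : ∀ s s', covered s → ¬ edges s s'

/-- A list of difference constraints is canonical (every constraint is tight):
no constraint is implied by the remaining ones. -/
def canonicalL (N : Network) (L : List (DiffConstraint N.LVar)) : Prop :=
  ∀ c ∈ L, ∃ v, N.IsLVal v ∧ (∀ c' ∈ L, c' ≠ c → csat v c') ∧ ¬ csat v c

/-- Minea's region-like equivalence with maximal constant `cmax`. -/
def regEquiv {V : Type} (cmax : ℤ) (v1 v2 : V → ℝ) : Prop :=
  ∀ a b : V, (⌊v1 a - v1 b⌋ = ⌊v2 a - v2 b⌋) ∨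
    (⌊v1 a - v1 b⌋ > cmax ∧ ⌊v2 a - v2 b⌋ > cmax) ∨
    (⌊v1 a - v1 b⌋ < -cmax ∧ ⌊v2 a - v2 b⌋ < -cmax)

section Aux

variable {N : Network}

/-- Shift reference clocks by a per-process delay. -/
def shiftv (v : N.LVal) (δ : Fin N.k → ℝ) : N.LVal :=
  fun y => match y with
    | .inl x => v (.inl x)
    | .inr p => v (.inr p) + δ p

@[simp] lemma shiftv_inl (v : N.LVal) (δ : Fin N.k → ℝ) (x : N.Clock) :
    shiftv v δ (.inl x) = v (.inl x) := rfl

@[simp] lemma shiftv_inr (v : N.LVal) (δ : Fin N.k → ℝ) (p : Fin N.k) :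
    shiftv v δ (.inr p) = v (.inr p) + δ p := rfl

lemma ldelayed_shiftv (v : N.LVal) (δ : Fin N.k → ℝ) (h : ∀ p, 0 ≤ δ p) :
    N.ldelayed v (shiftv v δ) := ⟨δ, h, rfl⟩

lemma ldelayed_refl (w : N.LVal) : N.ldelayed w w :=
  ⟨fun _ => 0, fun _ => le_rfl, funext fun y => by cases y <;> simp⟩

@[simp] lemma lreset_inl (R : Set N.Clock) (v : N.LVal) (x : N.Clock) :
    N.lreset R v (.inl x) = if x ∈ R then v (.inr (N.owner x)) else v (.inl x) := rfl

@[simp] lemma lreset_inr (R : Set N.Clock) (v : N.LVal) (p : Fin N.k) :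
    N.lreset R v (.inr p) = v (.inr p) := rfl

lemma lrun_nil_inv {q : N.State} {v : N.LVal} {c} (h : N.LRun [] (q, v) c) :
    c.1 = q ∧ N.ldelayed v c.2 := by
  cases h with | nil hd => exact ⟨rfl, hd⟩

lemma lrun_cons_inv {b : N.Act} {u : List N.Act} {q : N.State} {v : N.LVal} {c2}
    (h : N.LRun (b :: u) (q, v) c2) :
    ∃ v1 c1, N.ldelayed v v1 ∧ N.lact b (q, v1) c1 ∧ N.LRun u c1 c2 := by
  cases h with | cons hd hb h => exact ⟨_, _, hd, hb, h⟩

lemma reset_owner {b : N.Act}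
    (tr : ∀ p, p ∈ N.dom b → N.Loc p × Guard N.Clock × Set N.Clock × N.Loc p)
    (htr : ∀ p (h : p ∈ N.dom b), tr p h ∈ N.Trans b p)
    {x : N.Clock} (hx : x ∈ {x | ∃ p h, x ∈ (tr p h).2.2.1}) : N.owner x ∈ N.dom b := by
  obtain ⟨p, h, hx⟩ := hx
  rw [(N.trans_wf b p _ (htr p h)).2 x hx]; exact h

lemma lgsat_congr {v w : N.LVal} {g : Guard N.Clock}
    (heq : ∀ c ∈ g, w (.inr (N.owner c.1)) - w (.inl c.1)
        = v (.inr (N.owner c.1)) - v (.inl c.1))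
    (h : N.lgsat v g) : N.lgsat w g := by
  intro c hc
  rw [heq c hc]
  exact h c hc

end Aux

theorem stmt1 (N : Network) (a b : N.Act) (hd : Disjoint (N.dom a) (N.dom b)) :
    (∀ (q : N.State) (v : N.LVal) (q' : N.State) (v' : N.LVal), N.IsLVal v →
      N.LRun [a, b] (q, v) (q', v') → N.LRun [b, a] (q, v) (q', v')) ∧
    (∀ (q : N.State) (v : N.LVal) qa (va : N.LVal) qb (vb : N.LVal), N.IsLVal v →
      N.LRun [a] (q, v) (qa, va) → N.LRun [b] (q, v) (qb, vb) →
      ∃ qab vab, N.LRun [a, b] (q, v) (qab, vab)) := by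
  classical
  have hdisj : ∀ p, p ∈ N.dom a → p ∉ N.dom b := fun p hp hq =>
    (Finset.disjoint_left.mp hd) hp hq
  have hdisj' : ∀ p, p ∈ N.dom b → p ∉ N.dom a := fun p hp hq => hdisj p hq hp
  constructor
  · -- swapping an ab-run into a ba-run
    intro q v q' v' _ h
    obtain ⟨v1, c1, hd1, hb1, h1⟩ := lrun_cons_inv h
    obtain ⟨q1, w1⟩ := c1
    obtain ⟨v2, c2, hd2, hb2, h2⟩ := lrun_cons_inv h1
    obtain ⟨q2, w2⟩ := c2
    obtain ⟨hq2, hd3⟩ := lrun_nil_inv h2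
    subst hq2
    obtain ⟨δ1, hδ1, hv1⟩ := hd1
    have hv1' : v1 = shiftv v δ1 := hv1
    subst hv1'
    obtain ⟨trA, hA1, hA2, hA3, hA4, hA5⟩ := hb1
    obtain ⟨δ2, hδ2, hv2⟩ := hd2
    have hv2' : v2 = shiftv w1 δ2 := hv2
    subst hv2'
    obtain ⟨trB, hB1, hB2, hB3, hB4, hB5⟩ := hb2
    dsimp only at hA1 hA2 hA3 hA4 hA5 hB1 hB2 hB3 hB4 hB5
    obtain ⟨δ3, hδ3, hv'⟩ := hd3
    have hv'' : v' = shiftv w2 δ3 := hv'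
    subst hv''
    set Ra : Set N.Clock := {x | ∃ p h, x ∈ (trA p h).2.2.1} with hRadef
    set Rb : Set N.Clock := {x | ∃ p h, x ∈ (trB p h).2.2.1} with hRbdef
    have hRaMem : ∀ x ∈ Ra, N.owner x ∈ N.dom a := fun x hx =>
      reset_owner trA (fun p h => (hA1 p h).1) hx
    have hRbMem : ∀ x ∈ Rb, N.owner x ∈ N.dom b := fun x hx =>
      reset_owner trB (fun p h => (hB1 p h).1) hx
    have hw1l : ∀ x, w1 (.inl x)
        = if x ∈ Ra then v (.inr (N.owner x)) + δ1 (N.owner x) else v (.inl x) := by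
      intro x; rw [hA5]; by_cases hx : x ∈ Ra <;> simp [hx]
    have hw1r : ∀ p, w1 (.inr p) = v (.inr p) + δ1 p := by
      intro p; rw [hA5]; simp
    -- the delays and intermediate objects of the swapped run
    set η1 : Fin N.k → ℝ := fun p => if p ∈ N.dom b then δ1 p + δ2 p else 0 with hη1
    set u1 : N.LVal := shiftv v η1 with hu1
    set q1' : N.State := fun p => if hp : p ∈ N.dom b then (trB p hp).2.2.2 else q p with hq1'
    set u1' : N.LVal := N.lreset Rb u1 with hu1'
    set η2 : Fin N.k → ℝ := fun p => if p ∈ N.dom a then δ1 p else 0 with hη2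
    set u2 : N.LVal := shiftv u1' η2 with hu2
    set w2' : N.LVal := N.lreset Ra u2 with hw2'
    have hη1pos : ∀ p, 0 ≤ η1 p := by
      intro p; rw [hη1]
      by_cases hp : p ∈ N.dom b <;> simp [hp]
      exact add_nonneg (hδ1 p) (hδ2 p)
    have hη2pos : ∀ p, 0 ≤ η2 p := by
      intro p; rw [hη2]
      by_cases hp : p ∈ N.dom a <;> simp [hp, hδ1 p]
    have hu1inr : ∀ p, u1 (.inr p) = v (.inr p) + η1 p := by intro p; rw [hu1]; simp
    have hu1inl : ∀ x, u1 (.inl x) = v (.inl x) := by intro x; rw [hu1]; simp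
    -- the b-step of the swapped run
    have hstep_b : N.lact b (q, u1) (q1', u1') := by
      refine ⟨trB, ?_, ?_, ?_, ?_, rfl⟩
      · intro p hp
        refine ⟨(hB1 p hp).1, ?_, ?_⟩
        · rw [(hB1 p hp).2.1, hA2 p (hdisj' p hp)]
        · rw [hq1']; simp [hp]
      · intro p hp; rw [hq1']; simp [hp]
      · intro p hp p' hp'
        dsimp only
        have e : ∀ r, r ∈ N.dom b → u1 (.inr r) = shiftv w1 δ2 (.inr r) := by
          intro r hr
          rw [hu1inr, hη1]
          simp [hr, hw1r r]; ring
        rw [e p hp, e p' hp']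
        exact hB3 p hp p' hp'
      · intro p hp
        dsimp only
        refine lgsat_congr ?_ (hB4 p hp)
        intro c hc
        have ho : N.owner c.1 = p := (N.trans_wf b p _ (hB1 p hp).1).1 c hc
        have hnotRa : c.1 ∉ Ra := fun hx => hdisj _ (hRaMem _ hx) (ho ▸ hp)
        rw [ho]
        simp only [shiftv_inr, shiftv_inl, hu1inr, hu1inl, hw1r, hw1l, hη1]
        simp [hp, hnotRa]; ring
    have hu1'inl : ∀ x, u1' (.inl x)
        = if x ∈ Rb then v (.inr (N.owner x)) + η1 (N.owner x) else v (.inl x) := by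
      intro x; rw [hu1']
      by_cases hx : x ∈ Rb <;> simp [hx, hu1inr, hu1inl]
    have hu1'inr : ∀ p, u1' (.inr p) = v (.inr p) + η1 p := by
      intro p; rw [hu1']; simp [hu1inr]
    have hu2inr : ∀ p, u2 (.inr p) = v (.inr p) + η1 p + η2 p := by
      intro p; rw [hu2]; simp [hu1'inr]
    have hu2inl : ∀ x, u2 (.inl x)
        = if x ∈ Rb then v (.inr (N.owner x)) + η1 (N.owner x) else v (.inl x) := by
      intro x; rw [hu2]; simp [hu1'inl]
    -- the a-step of the swapped run
    have hstep_a : N.lact a (q1', u2) (q', w2') := by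
      refine ⟨trA, ?_, ?_, ?_, ?_, rfl⟩
      · intro p hp
        have hpb : p ∉ N.dom b := hdisj p hp
        refine ⟨(hA1 p hp).1, ?_, ?_⟩
        · rw [(hA1 p hp).2.1, hq1']; simp [hpb]
        · rw [(hA1 p hp).2.2]
          exact (hB2 p hpb).symm
      · intro p hp
        by_cases hpb : p ∈ N.dom b
        · rw [hq1']; simp only [hpb, dif_pos]
          exact ((hB1 p hpb).2.2).symm
        · rw [hq1']; simp only [hpb, dif_neg, not_false_iff]
          rw [hB2 p hpb, hA2 p hp]
      · intro p hp p' hp'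
        dsimp only
        have e : ∀ r, r ∈ N.dom a → u2 (.inr r) = shiftv v δ1 (.inr r) := by
          intro r hr
          rw [hu2inr, hη1, hη2]
          simp [hr, hdisj r hr]
        rw [e p hp, e p' hp']
        exact hA3 p hp p' hp'
      · intro p hp
        dsimp only
        refine lgsat_congr ?_ (hA4 p hp)
        intro c hc
        have ho : N.owner c.1 = p := (N.trans_wf a p _ (hA1 p hp).1).1 c hc
        have hnotRb : c.1 ∉ Rb := fun hx => hdisj' _ (hRbMem _ hx) (ho ▸ hp)
        rw [hu2inr, hu2inl, hη1, hη2, ho]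
        simp [hp, hdisj p hp, hnotRb]
    -- the final delay of the swapped run
    set η3 : Fin N.k → ℝ := fun p => δ1 p + δ2 p + δ3 p - η1 p - η2 p with hη3
    have hle : ∀ p, η1 p + η2 p ≤ δ1 p + δ2 p := by
      intro p; rw [hη1, hη2]
      by_cases hpb : p ∈ N.dom b
      · simp [hpb, hdisj' p hpb]
      · by_cases hpa : p ∈ N.dom a
        · simp [hpb, hpa]; linarith [hδ2 p]
        · simp [hpb, hpa]; linarith [hδ1 p, hδ2 p]
    have hη3pos : ∀ p, 0 ≤ η3 p := by
      intro p; rw [hη3]; simp only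
      linarith [hle p, hδ3 p]
    have hw2l : ∀ x, w2 (.inl x)
        = if x ∈ Rb then w1 (.inr (N.owner x)) + δ2 (N.owner x) else w1 (.inl x) := by
      intro x; rw [hB5]; by_cases hx : x ∈ Rb <;> simp [hx]
    have hw2r : ∀ p, w2 (.inr p) = w1 (.inr p) + δ2 p := by
      intro p; rw [hB5]; simp
    have hfin : N.ldelayed w2' (shiftv w2 δ3) := by
      refine ⟨η3, hη3pos, funext fun y => ?_⟩
      cases y with
      | inl x =>
        show w2 (.inl x) = w2' (.inl x)
        rw [hw2l]
        by_cases hxb : x ∈ Rb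
        · have ho : N.owner x ∈ N.dom b := hRbMem x hxb
          have hxa : x ∉ Ra := fun hx => hdisj' _ ho (hRaMem _ hx)
          rw [hw2', hw1r]
          simp [hxb, hxa, hu2inl, hη1, ho]
          ring
        · rw [hw1l]
          by_cases hxa : x ∈ Ra
          · have ho : N.owner x ∈ N.dom a := hRaMem x hxa
            rw [hw2']
            simp [hxa, hxb, hu2inr, hη1, hη2, ho, hdisj _ ho]
          · rw [hw2']
            simp [hxa, hxb, hu2inl]
      | inr p =>
        show w2 (.inr p) + δ3 p = w2' (.inr p) + η3 p
        rw [hw2r, hw1r, hw2', lreset_inr, hu2inr, hη3]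
        ring
    exact Network.LRun.cons (ldelayed_shiftv v η1 hη1pos) hstep_b
      (Network.LRun.cons (ldelayed_shiftv u1' η2 hη2pos) hstep_a
        (Network.LRun.nil hfin))
  · -- combining an a-run and a b-run into an ab-run
    intro q v qa va qb vb _ hruna hrunb
    obtain ⟨v1, c1, hd1, hb1, h1⟩ := lrun_cons_inv hruna
    obtain ⟨q1, w1⟩ := c1
    obtain ⟨δ1, hδ1, hv1⟩ := hd1
    have hv1' : v1 = shiftv v δ1 := hv1
    subst hv1'
    obtain ⟨trA, hA1, hA2, hA3, hA4, hA5⟩ := hb1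
    obtain ⟨ub, cB, hdB, hbB, hB⟩ := lrun_cons_inv hrunb
    obtain ⟨qB1, wB1⟩ := cB
    obtain ⟨ε1, hε1, hub⟩ := hdB
    have hub' : ub = shiftv v ε1 := hub
    subst hub'
    obtain ⟨trB, hB1, hB2, hB3, hB4, hB5⟩ := hbB
    dsimp only at hA1 hA2 hA3 hA4 hA5 hB1 hB2 hB3 hB4 hB5
    set Ra : Set N.Clock := {x | ∃ p h, x ∈ (trA p h).2.2.1} with hRadef
    set Rb : Set N.Clock := {x | ∃ p h, x ∈ (trB p h).2.2.1} with hRbdef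
    have hRaMem : ∀ x ∈ Ra, N.owner x ∈ N.dom a := fun x hx =>
      reset_owner trA (fun p h => (hA1 p h).1) hx
    -- the objects of the combined run
    set η1 : Fin N.k → ℝ := fun p => if p ∈ N.dom a then δ1 p else 0 with hη1
    set u1 : N.LVal := shiftv v η1 with hu1
    set q1' : N.State := fun p => if hp : p ∈ N.dom a then (trA p hp).2.2.2 else q p with hq1'
    set u1' : N.LVal := N.lreset Ra u1 with hu1'
    set η2 : Fin N.k → ℝ := fun p => if p ∈ N.dom b then ε1 p else 0 with hη2
    set u2 : N.LVal := shiftv u1' η2 with hu2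
    set q2' : N.State := fun p => if hp : p ∈ N.dom b then (trB p hp).2.2.2 else q1' p with hq2'
    set w2'' : N.LVal := N.lreset Rb u2 with hw2''
    have hη1pos : ∀ p, 0 ≤ η1 p := by
      intro p; rw [hη1]; by_cases hp : p ∈ N.dom a <;> simp [hp, hδ1 p]
    have hη2pos : ∀ p, 0 ≤ η2 p := by
      intro p; rw [hη2]; by_cases hp : p ∈ N.dom b <;> simp [hp, hε1 p]
    have hu1inr : ∀ p, u1 (.inr p) = v (.inr p) + η1 p := by intro p; rw [hu1]; simp
    have hu1inl : ∀ x, u1 (.inl x) = v (.inl x) := by intro x; rw [hu1]; simp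
    have hu1'inr : ∀ p, u1' (.inr p) = v (.inr p) + η1 p := by
      intro p; rw [hu1']; simp [hu1inr]
    have hu1'inl : ∀ x, u1' (.inl x)
        = if x ∈ Ra then v (.inr (N.owner x)) + η1 (N.owner x) else v (.inl x) := by
      intro x; rw [hu1']
      by_cases hx : x ∈ Ra <;> simp [hx, hu1inr, hu1inl]
    have hu2inr : ∀ p, u2 (.inr p) = v (.inr p) + η1 p + η2 p := by
      intro p; rw [hu2]; simp [hu1'inr]
    have hu2inl : ∀ x, u2 (.inl x)
        = if x ∈ Ra then v (.inr (N.owner x)) + η1 (N.owner x) else v (.inl x) := by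
      intro x; rw [hu2]; simp [hu1'inl]
    -- the a-step
    have hstep_a : N.lact a (q, u1) (q1', u1') := by
      refine ⟨trA, ?_, ?_, ?_, ?_, rfl⟩
      · intro p hp
        refine ⟨(hA1 p hp).1, (hA1 p hp).2.1, ?_⟩
        rw [hq1']; simp [hp]
      · intro p hp; rw [hq1']; simp [hp]
      · intro p hp p' hp'
        dsimp only
        have e : ∀ r, r ∈ N.dom a → u1 (.inr r) = shiftv v δ1 (.inr r) := by
          intro r hr; rw [hu1inr, hη1]; simp [hr]
        rw [e p hp, e p' hp']
        exact hA3 p hp p' hp'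
      · intro p hp
        dsimp only
        refine lgsat_congr ?_ (hA4 p hp)
        intro c hc
        have ho : N.owner c.1 = p := (N.trans_wf a p _ (hA1 p hp).1).1 c hc
        rw [hu1inr, hu1inl, hη1, ho]
        simp [hp]
    -- the b-step
    have hstep_b : N.lact b (q1', u2) (q2', w2'') := by
      refine ⟨trB, ?_, ?_, ?_, ?_, rfl⟩
      · intro p hp
        have hpa : p ∉ N.dom a := hdisj' p hp
        refine ⟨(hB1 p hp).1, ?_, ?_⟩
        · rw [(hB1 p hp).2.1, hq1']; simp [hpa]
        · rw [hq2']; simp [hp]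
      · intro p hp; rw [hq2']; simp [hp]
      · intro p hp p' hp'
        dsimp only
        have e : ∀ r, r ∈ N.dom b → u2 (.inr r) = shiftv v ε1 (.inr r) := by
          intro r hr
          rw [hu2inr, hη1, hη2]
          simp [hr, hdisj' r hr]
        rw [e p hp, e p' hp']
        exact hB3 p hp p' hp'
      · intro p hp
        dsimp only
        refine lgsat_congr ?_ (hB4 p hp)
        intro c hc
        have ho : N.owner c.1 = p := (N.trans_wf b p _ (hB1 p hp).1).1 c hc
        have hnotRa : c.1 ∉ Ra := fun hx => hdisj _ (hRaMem _ hx) (ho ▸ hp)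
        rw [hu2inr, hu2inl, hη1, hη2, ho]
        simp [hp, hdisj' p hp, hnotRa]
    exact ⟨q2', w2'',
      Network.LRun.cons (ldelayed_shiftv v η1 hη1pos) hstep_a
        (Network.LRun.cons (ldelayed_shiftv u1' η2 hη2pos) hstep_b
          (Network.LRun.nil (ldelayed_refl w2'')))⟩
end

section
/- If (q_0, v_0) =u=> (q_n, v_n) is a local run and u ~ w (equivalent up to permuting adjacent actions with disjoint domains), then (q_0, v_0) =w=> (q_n, v_n) is also a local run, reaching the same state and the same local valuation. -/
open Classical

namespace Network

variable {N : Network}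

lemma ldelayed_refl (v : N.LVal) : N.ldelayed v v := by
  refine ⟨fun _ => 0, fun _ => le_refl _, ?_⟩
  funext y; cases y <;> simp

lemma ldelayed_trans {u v w : N.LVal} (h1 : N.ldelayed u v) (h2 : N.ldelayed v w) :
    N.ldelayed u w := by
  obtain ⟨δ1, h1p, rfl⟩ := h1
  obtain ⟨δ2, h2p, rfl⟩ := h2
  refine ⟨fun p => δ1 p + δ2 p, fun p => add_nonneg (h1p p) (h2p p), ?_⟩
  funext y; cases y <;> simp <;> ring

lemma lrun_delay_left {w : List N.Act} {q : N.State} {u v : N.LVal} {c2}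
    (hd : N.ldelayed u v) (h : N.LRun w (q, v) c2) : N.LRun w (q, u) c2 := by
  cases h with
  | nil hd' => exact LRun.nil (ldelayed_trans hd hd')
  | cons hd' hb h => exact LRun.cons (ldelayed_trans hd hd') hb h

lemma swap_run {a b : N.Act} (hdisj : Disjoint (N.dom a) (N.dom b))
    {w : List N.Act} {q : N.State} {v : N.LVal} {c2}
    (h : N.LRun (a :: b :: w) (q, v) c2) : N.LRun (b :: a :: w) (q, v) c2 := by
  have hab : ∀ p ∈ N.dom a, p ∉ N.dom b := fun p hp => Finset.disjoint_left.mp hdisj hp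
  have hba : ∀ p ∈ N.dom b, p ∉ N.dom a := fun p hp => Finset.disjoint_right.mp hdisj hp
  cases h with
  | cons hd1 hactA h1 =>
    rename_i v1 ca
    obtain ⟨qa, wa⟩ := ca
    cases h1 with
    | cons hd2 hactB h2 =>
      rename_i v2 cb
      obtain ⟨qb, wb⟩ := cb
      obtain ⟨δ1, hδ1, hv1⟩ := hd1
      obtain ⟨trA, hA1, hA2, hAsync, hAg, hAreset⟩ := hactA
      obtain ⟨δ2, hδ2, hv2⟩ := hd2
      obtain ⟨trB, hB1, hB2, hBsync, hBg, hBreset⟩ := hactB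
      simp only at hA1 hA2 hAsync hAg hAreset hB1 hB2 hBsync hBg hBreset
      -- evaluation lemmas for old valuations
      have hv1_inr : ∀ p, v1 (.inr p) = v (.inr p) + δ1 p := by intro p; rw [hv1]
      have hv1_inl : ∀ x, v1 (.inl x) = v (.inl x) := by intro x; rw [hv1]
      have hv2_inr : ∀ p, v2 (.inr p) = wa (.inr p) + δ2 p := by intro p; rw [hv2]
      have hv2_inl : ∀ x, v2 (.inl x) = wa (.inl x) := by intro x; rw [hv2]
      -- reset sets
      set RA : Set N.Clock := {x | ∃ p h, x ∈ (trA p h).2.2.1} with hRAdef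
      set RB : Set N.Clock := {x | ∃ p h, x ∈ (trB p h).2.2.1} with hRBdef
      have hRAown : ∀ x ∈ RA, N.owner x ∈ N.dom a := by
        rintro x ⟨p, hp, hx⟩
        have := (N.trans_wf a p _ (hA1 p hp).1).2 x hx
        rw [this]; exact hp
      have hRBown : ∀ x ∈ RB, N.owner x ∈ N.dom b := by
        rintro x ⟨p, hp, hx⟩
        have := (N.trans_wf b p _ (hB1 p hp).1).2 x hx
        rw [this]; exact hp
      have hwa_inr : ∀ p, wa (.inr p) = v1 (.inr p) := by
        intro p; rw [hAreset]; rfl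
      have hwa_inl : ∀ x, wa (.inl x) =
          if x ∈ RA then v1 (.inr (N.owner x)) else v1 (.inl x) := by
        intro x; rw [hAreset]; simp only [lreset]; split <;> rfl
      have hwb_inr : ∀ p, wb (.inr p) = v2 (.inr p) := by
        intro p; rw [hBreset]; rfl
      have hwb_inl : ∀ x, wb (.inl x) =
          if x ∈ RB then v2 (.inr (N.owner x)) else v2 (.inl x) := by
        intro x; rw [hBreset]; simp only [lreset]; split <;> rfl
      -- new first delay
      set v1' : N.LVal := fun y => match y with
        | .inl x => v (.inl x)
        | .inr p => v (.inr p) + (δ1 p + if p ∈ N.dom a then 0 else δ2 p) with hv1'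
      have hd1' : N.ldelayed v v1' :=
        ⟨fun p => δ1 p + if p ∈ N.dom a then 0 else δ2 p,
         fun p => by
           show 0 ≤ δ1 p + if p ∈ N.dom a then 0 else δ2 p
           have := hδ1 p; have := hδ2 p; split <;> linarith, rfl⟩
      have hv1'_inr : ∀ p, v1' (.inr p) =
          v (.inr p) + (δ1 p + if p ∈ N.dom a then 0 else δ2 p) := fun p => rfl
      have hv1'_inl : ∀ x, v1' (.inl x) = v (.inl x) := fun x => rfl
      -- the intermediate state of the new run
      set qm : N.State := fun p => if h : p ∈ N.dom b then (trB p h).2.2.2 else q p with hqm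
      set wb' : N.LVal := N.lreset RB v1' with hwb'
      set u' : N.LVal := N.lreset RA wb' with hu'
      have hwb'_inr : ∀ p, wb' (.inr p) = v1' (.inr p) := fun p => rfl
      have hwb'_inl : ∀ x, wb' (.inl x) =
          if x ∈ RB then v1' (.inr (N.owner x)) else v1' (.inl x) := by
        intro x; rw [hwb']; simp only [lreset]; split <;> rfl
      have hu'_inr : ∀ p, u' (.inr p) = wb' (.inr p) := fun p => rfl
      have hu'_inl : ∀ x, u' (.inl x) =
          if x ∈ RA then wb' (.inr (N.owner x)) else wb' (.inl x) := by
        intro x; rw [hu']; simp only [lreset]; split <;> rfl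
      -- step b first
      have hactB' : N.lact b (q, v1') (qm, wb') := by
        refine ⟨trB, ?_, ?_, ?_, ?_, rfl⟩
        · intro p hp
          refine ⟨(hB1 p hp).1, ?_, ?_⟩
          · show (trB p hp).1 = q p
            rw [(hB1 p hp).2.1, hA2 p (hba p hp)]
          · show (trB p hp).2.2.2 = qm p
            simp only [hqm]; rw [dif_pos hp]
        · intro p hp
          show qm p = q p
          simp only [hqm]; rw [dif_neg hp]
        · intro p hp p' hp'
          show v1' (.inr p) = v1' (.inr p')
          have := hBsync p hp p' hp'
          rw [hv2_inr, hv2_inr, hwa_inr, hwa_inr, hv1_inr, hv1_inr] at this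
          rw [hv1'_inr, hv1'_inr, if_neg (hba p hp), if_neg (hba p' hp')]
          linarith
        · intro p hp c hc
          have hcow : N.owner c.1 = p := (N.trans_wf b p _ (hB1 p hp).1).1 c hc
          have hnotRA : c.1 ∉ RA := by
            intro hmem
            exact hba p hp (hcow ▸ hRAown c.1 hmem)
          have hold := hBg p hp c hc
          have e1 : v2 (.inr (N.owner c.1)) = v1' (.inr (N.owner c.1)) := by
            rw [hv2_inr, hwa_inr, hv1_inr, hv1'_inr, hcow, if_neg (hba p hp)]
            ring
          have e2 : v2 (.inl c.1) = v1' (.inl c.1) := by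
            rw [hv2_inl, hwa_inl, if_neg hnotRA, hv1_inl, hv1'_inl]
          rw [e1, e2] at hold
          exact hold
      -- then step a
      have hactA' : N.lact a (qm, wb') (qb, u') := by
        refine ⟨trA, ?_, ?_, ?_, ?_, rfl⟩
        · intro p hp
          refine ⟨(hA1 p hp).1, ?_, ?_⟩
          · show (trA p hp).1 = qm p
            rw [(hA1 p hp).2.1]; simp only [hqm]; rw [dif_neg (hab p hp)]
          · show (trA p hp).2.2.2 = qb p
            rw [(hA1 p hp).2.2, ← hB2 p (hab p hp)]
        · intro p hp
          show qb p = qm p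
          by_cases hpb : p ∈ N.dom b
          · rw [← (hB1 p hpb).2.2]; simp only [hqm]; rw [dif_pos hpb]
          · rw [hB2 p hpb, hA2 p hp]; simp only [hqm]; rw [dif_neg hpb]
        · intro p hp p' hp'
          show wb' (.inr p) = wb' (.inr p')
          have := hAsync p hp p' hp'
          rw [hv1_inr, hv1_inr] at this
          rw [hwb'_inr, hwb'_inr, hv1'_inr, hv1'_inr, if_pos hp, if_pos hp']
          linarith
        · intro p hp c hc
          have hcow : N.owner c.1 = p := (N.trans_wf a p _ (hA1 p hp).1).1 c hc
          have hnotRB : c.1 ∉ RB := by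
            intro hmem
            exact hab p hp (hcow ▸ hRBown c.1 hmem)
          have hold := hAg p hp c hc
          have e1 : v1 (.inr (N.owner c.1)) = wb' (.inr (N.owner c.1)) := by
            rw [hv1_inr, hwb'_inr, hv1'_inr, hcow, if_pos hp]
            ring
          have e2 : v1 (.inl c.1) = wb' (.inl c.1) := by
            rw [hv1_inl, hwb'_inl, if_neg hnotRB, hv1'_inl]
          rw [e1, e2] at hold
          exact hold
      -- the final valuations match up to a delay
      have hfinal : N.ldelayed u' wb := by
        refine ⟨fun p => if p ∈ N.dom a then δ2 p else 0,
          fun p => by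
            show (0:ℝ) ≤ if p ∈ N.dom a then δ2 p else 0
            have := hδ2 p; split <;> linarith, ?_⟩
        funext y
        cases y with
        | inr p =>
          show wb (.inr p) = u' (.inr p) + _
          rw [hwb_inr, hv2_inr, hwa_inr, hv1_inr, hu'_inr, hwb'_inr, hv1'_inr]
          by_cases hpa : p ∈ N.dom a <;> simp only [hpa, if_true, if_false,
            ite_true, ite_false] <;> ring
        | inl x =>
          show wb (.inl x) = u' (.inl x)
          rw [hwb_inl, hu'_inl]
          by_cases hxa : x ∈ RA
          · have hoa : N.owner x ∈ N.dom a := hRAown x hxa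
            have hxb : x ∉ RB := fun hm => hab _ hoa (hRBown x hm)
            rw [if_neg hxb, if_pos hxa, hwb'_inr, hv2_inl, hwa_inl, if_pos hxa,
              hv1_inr, hv1'_inr, if_pos hoa]
            ring
          · by_cases hxb : x ∈ RB
            · have hob : N.owner x ∈ N.dom b := hRBown x hxb
              rw [if_pos hxb, if_neg hxa, hwb'_inl, if_pos hxb, hv2_inr, hwa_inr,
                hv1_inr, hv1'_inr, if_neg (hba _ hob)]
              ring
            · rw [if_neg hxb, if_neg hxa, hwb'_inl, if_neg hxb, hv2_inl, hwa_inl,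
                if_neg hxa, hv1_inl, hv1'_inl]
      exact LRun.cons hd1' hactB'
        (LRun.cons (ldelayed_refl wb') hactA' (lrun_delay_left hfinal h2))

lemma swap_prefix {a b : N.Act} (hdisj : Disjoint (N.dom a) (N.dom b))
    (u w : List N.Act) :
    ∀ {c c2 : N.State × N.LVal}, N.LRun (u ++ a :: b :: w) c c2 →
      N.LRun (u ++ b :: a :: w) c c2 := by
  induction u with
  | nil =>
    intro c c2 h
    obtain ⟨q, v⟩ := c
    exact swap_run hdisj h
  | cons x u ih =>
    intro c c2 h
    obtain ⟨q, v⟩ := c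
    rw [List.cons_append] at h ⊢
    cases h with
    | cons hd hb h => exact LRun.cons hd hb (ih h)

lemma equiv_run {u w : List N.Act} (h : N.equiv u w) :
    ∀ {c c2 : N.State × N.LVal}, N.LRun u c c2 → N.LRun w c c2 := by
  induction h with
  | swap u w a b hdisj => intro c c2 hr; exact swap_prefix hdisj u w hr
  | refl u => intro c c2 hr; exact hr
  | trans h1 h2 ih1 ih2 => intro c c2 hr; exact ih2 (ih1 hr)

end Network

theorem stmt2 (N : Network) (u w : List N.Act) (h : N.equiv u w)
    (q : N.State) (v : N.LVal) (hv : N.IsLVal v) (q' : N.State) (v' : N.LVal)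
    (hr : N.LRun u (q, v) (q', v')) : N.LRun w (q, v) (q', v') := Network.equiv_run h hr
end

section
/- If (q,v) =u=> (q',v') is a local run where both v and v' are synchronized local valuations, then there exists w ~ u and a global run (q, global(v)) -w-> (q', global(v')). -/
open Classical

namespace Network

variable {N : Network}

lemma lreset_inl (R : Set N.Clock) (v : N.LVal) (x : N.Clock) :
    N.lreset R v (.inl x) = if x ∈ R then v (.inr (N.owner x)) else v (.inl x) := rfl

lemma lreset_inr (R : Set N.Clock) (v : N.LVal) (p : Fin N.k) :
    N.lreset R v (.inr p) = v (.inr p) := rfl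

lemma greset_inl (R : Set N.Clock) (g : N.GVal) (x : N.Clock) :
    N.greset R g (.inl x) = if x ∈ R then g (.inr ()) else g (.inl x) := rfl

lemma gdelay_inl (g : N.GVal) (δ : ℝ) (x : N.Clock) :
    N.gdelay g δ (.inl x) = g (.inl x) := rfl

lemma gdelay_inr (g : N.GVal) (δ : ℝ) (u : Unit) :
    N.gdelay g δ (.inr u) = g (.inr ()) + δ := rfl

/-! ### Basic facts about local delays and actions -/

lemma ldelayed_inl {v v' : N.LVal} (h : N.ldelayed v v') (x : N.Clock) :
    v' (.inl x) = v (.inl x) := by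
  obtain ⟨δ, -, rfl⟩ := h; rfl

lemma ldelayed_inr {v v' : N.LVal} (h : N.ldelayed v v') (p : Fin N.k) :
    v (.inr p) ≤ v' (.inr p) := by
  obtain ⟨δ, hδ, rfl⟩ := h; simpa using hδ p

lemma ldelayed_trans_s4 {v1 v2 v3 : N.LVal} (h1 : N.ldelayed v1 v2)
    (h2 : N.ldelayed v2 v3) : N.ldelayed v1 v3 := by
  obtain ⟨δ, hδ, rfl⟩ := h1; obtain ⟨δ', hδ', rfl⟩ := h2
  refine ⟨fun p => δ p + δ' p, fun p => add_nonneg (hδ p) (hδ' p), ?_⟩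
  funext y; cases y <;> simp <;> ring

lemma lact_inr {b : N.Act} {c c' : N.State × N.LVal} (h : N.lact b c c')
    (p : Fin N.k) : c'.2 (.inr p) = c.2 (.inr p) := by
  obtain ⟨tr, -, -, -, -, hres⟩ := h; rw [hres]; rfl

lemma lact_inl_not_dom {b : N.Act} {c c' : N.State × N.LVal} (h : N.lact b c c')
    {x : N.Clock} (hx : N.owner x ∉ N.dom b) : c'.2 (.inl x) = c.2 (.inl x) := by
  obtain ⟨tr, h1, -, -, -, hres⟩ := h
  have hx' : x ∉ {x | ∃ p hp, x ∈ (tr p hp).2.2.1} := by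
    rintro ⟨p, hp, hxp⟩
    exact hx (((N.trans_wf b p _ (h1 p hp).1).2 x hxp) ▸ hp)
  rw [hres, lreset_inl, if_neg hx']

/-! ### Timed runs: smart constructor, inversion, monotonicity -/

lemma lrunT_cons' {x : N.Act × ℝ} {u : List (N.Act × ℝ)} {q : N.State}
    {v v1 : N.LVal} {c1 c2 : N.State × N.LVal}
    (hd : N.ldelayed v v1) (hb : N.lact x.1 (q, v1) c1)
    (hθ : ∀ p ∈ N.dom x.1, v1 (.inr p) = x.2) (h : N.LRunT u c1 c2) :
    N.LRunT (x :: u) (q, v) c2 := by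
  obtain ⟨b, θ⟩ := x; exact .cons hd hb hθ h

lemma lrunT_cons_inv {x : N.Act × ℝ} {u : List (N.Act × ℝ)} {q : N.State}
    {v : N.LVal} {c' : N.State × N.LVal} (h : N.LRunT (x :: u) (q, v) c') :
    ∃ v1 c1, N.ldelayed v v1 ∧ N.lact x.1 (q, v1) c1 ∧
      (∀ p ∈ N.dom x.1, v1 (.inr p) = x.2) ∧ N.LRunT u c1 c' := by
  obtain ⟨b, θ⟩ := x
  cases h with
  | cons hd hb hθ h => exact ⟨_, _, hd, hb, hθ, h⟩

lemma lrunT_mono {tu : List (N.Act × ℝ)} {c c' : N.State × N.LVal}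
    (h : N.LRunT tu c c') (p : Fin N.k) : c.2 (.inr p) ≤ c'.2 (.inr p) := by
  induction h with
  | nil hd => exact ldelayed_inr hd p
  | cons hd hb hθ h ih =>
    calc _ ≤ _ := ldelayed_inr hd p
    _ = _ := (lact_inr hb p).symm
    _ ≤ _ := ih

lemma lrunT_delay_prepend {l : List (N.Act × ℝ)} {q : N.State} {w w' : N.LVal}
    {c' : N.State × N.LVal} (hd : N.ldelayed w w') (h : N.LRunT l (q, w') c') :
    N.LRunT l (q, w) c' := by
  cases h with
  | nil hd2 => exact .nil (ldelayed_trans_s4 hd hd2)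
  | cons hd2 hb hθ h => exact .cons (ldelayed_trans_s4 hd hd2) hb hθ h

/-! ### Recording execution times -/

lemma lrun_toT {u : List N.Act} {c c' : N.State × N.LVal} (h : N.LRun u c c') :
    ∃ tu : List (N.Act × ℝ), tu.map Prod.fst = u ∧ N.LRunT tu c c' ∧
      ∀ i ∈ tu, ∃ p, c.2 (.inr p) ≤ i.2 ∧ i.2 ≤ c'.2 (.inr p) := by
  induction h with
  | nil hd => exact ⟨[], rfl, .nil hd, by simp⟩
  | @cons b u q v v1 c1 c2 hd hb h ih =>
    obtain ⟨tl, htl, hrtl, hbnd⟩ := ih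
    have hbc := hb
    obtain ⟨tr, -, -, hsync, -, -⟩ := hbc
    set p1 : Fin N.k := if h : (N.dom b).Nonempty then h.choose else ⟨0, N.kpos⟩ with hp1def
    have hθ : ∀ p ∈ N.dom b, v1 (.inr p) = v1 (.inr p1) := by
      intro p hp
      have hne : (N.dom b).Nonempty := ⟨p, hp⟩
      have hp1 : p1 ∈ N.dom b := by
        rw [hp1def, dif_pos hne]; exact hne.choose_spec
      exact hsync p hp p1 hp1
    refine ⟨(b, v1 (.inr p1)) :: tl, by simp [htl], .cons hd hb hθ hrtl, ?_⟩
    intro i hi0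
    rcases List.mem_cons.mp hi0 with rfl | hi
    · refine ⟨p1, ldelayed_inr hd p1, ?_⟩
      calc v1 (.inr p1) = c1.2 (.inr p1) := (lact_inr hb p1).symm
      _ ≤ c2.2 (.inr p1) := lrunT_mono hrtl p1
    · obtain ⟨p, hpl, hpr⟩ := hbnd i hi
      refine ⟨p, ?_, hpr⟩
      calc v (.inr p) ≤ v1 (.inr p) := ldelayed_inr hd p
      _ = c1.2 (.inr p) := (lact_inr hb p).symm
      _ ≤ i.2 := hpl

/-! ### Shared process forces time order -/

lemma adj_shared {x y : N.Act × ℝ} {l : List (N.Act × ℝ)} {q : N.State}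
    {v : N.LVal} {c' : N.State × N.LVal} {p : Fin N.k}
    (h : N.LRunT (x :: y :: l) (q, v) c')
    (hpx : p ∈ N.dom x.1) (hpy : p ∈ N.dom y.1) : x.2 ≤ y.2 := by
  obtain ⟨v1, c1, hd1, hb1, hθ1, h⟩ := lrunT_cons_inv h
  obtain ⟨q1, w1⟩ := c1
  obtain ⟨v2, c2, hd2, hb2, hθ2, -⟩ := lrunT_cons_inv h
  have e1 : v1 (.inr p) = x.2 := hθ1 p hpx
  have e2 : w1 (.inr p) = v1 (.inr p) := lact_inr hb1 p
  have e3 : w1 (.inr p) ≤ v2 (.inr p) := ldelayed_inr hd2 p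
  have e4 : v2 (.inr p) = y.2 := hθ2 p hpy
  linarith [e1, e2, e3, e4]
/-! ### Swapping adjacent independent actions -/

lemma swap_head {x y : N.Act × ℝ} {l : List (N.Act × ℝ)} {q : N.State}
    {v : N.LVal} {c' : N.State × N.LVal}
    (h : N.LRunT (x :: y :: l) (q, v) c')
    (hdisj : Disjoint (N.dom x.1) (N.dom y.1)) :
    N.LRunT (y :: x :: l) (q, v) c' := by
  obtain ⟨a, θa⟩ := x
  obtain ⟨b, θb⟩ := y
  simp only at hdisj
  have hnab : ∀ p ∈ N.dom a, p ∉ N.dom b := fun p hp => Finset.disjoint_left.mp hdisj hp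
  have hnba : ∀ p ∈ N.dom b, p ∉ N.dom a := fun p hp hpa => hnab p hpa hp
  obtain ⟨v1, c1, hd1, hba, hθa, h⟩ := lrunT_cons_inv h
  obtain ⟨q1, w1⟩ := c1
  obtain ⟨v2, c2, hd2, hbb, hθb, h2⟩ := lrunT_cons_inv h
  obtain ⟨q2, w2⟩ := c2
  obtain ⟨δ1, hδ1, hv1eq⟩ := hd1
  obtain ⟨δ2, hδ2, hv2eq⟩ := hd2
  obtain ⟨ta, ha1, ha2, hasync, hag, hares⟩ := hba
  obtain ⟨tb, hb1, hb2, hbsync, hbg, hbres⟩ := hbb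
  set Ra : Set N.Clock := {x | ∃ p hp, x ∈ (ta p hp).2.2.1} with hRadef
  set Rb : Set N.Clock := {x | ∃ p hp, x ∈ (tb p hp).2.2.1} with hRbdef
  have hRa : ∀ x ∈ Ra, N.owner x ∈ N.dom a := by
    rintro x ⟨p, hp, hxp⟩
    exact ((N.trans_wf a p _ (ha1 p hp).1).2 x hxp) ▸ hp
  have hRb : ∀ x ∈ Rb, N.owner x ∈ N.dom b := by
    rintro x ⟨p, hp, hxp⟩
    exact ((N.trans_wf b p _ (hb1 p hp).1).2 x hxp) ▸ hp
  -- pointwise facts about the original intermediate valuations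
  have hv1inl : ∀ z, v1 (.inl z) = v (.inl z) := by intro z; rw [hv1eq]
  have hv1inr : ∀ p, v1 (.inr p) = v (.inr p) + δ1 p := by intro p; rw [hv1eq]
  have hw1eq : w1 = N.lreset Ra v1 := hares
  have hw1inr : ∀ p, w1 (.inr p) = v1 (.inr p) := by intro p; rw [hw1eq]; rfl
  have hw1inl : ∀ z, z ∉ Ra → w1 (.inl z) = v (.inl z) := by
    intro z hz
    rw [hw1eq, lreset_inl, if_neg hz, hv1inl]
  have hw1inlR : ∀ z, z ∈ Ra → w1 (.inl z) = v1 (.inr (N.owner z)) := by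
    intro z hz
    rw [hw1eq, lreset_inl, if_pos hz]
  have hv2inl : ∀ z, v2 (.inl z) = w1 (.inl z) := by intro z; rw [hv2eq]
  have hv2inr : ∀ p, v2 (.inr p) = v (.inr p) + δ1 p + δ2 p := by
    intro p; rw [hv2eq]
    show w1 (.inr p) + δ2 p = v (.inr p) + δ1 p + δ2 p
    rw [hw1inr, hv1inr]
  have hv2inl_na : ∀ z, z ∉ Ra → v2 (.inl z) = v (.inl z) := by
    intro z hz; rw [hv2inl, hw1inl z hz]
  -- the new first delay and first intermediate valuation
  set δfun : Fin N.k → ℝ := fun p => if p ∈ N.dom b then δ1 p + δ2 p else δ1 p with hδfundef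
  set u1 : N.LVal := fun z => match z with
    | .inl x => v (.inl x)
    | .inr p => v (.inr p) + δfun p with hu1def
  have hδfb : ∀ p, p ∈ N.dom b → δfun p = δ1 p + δ2 p := by
    intro p hp; rw [hδfundef]; simp [hp]
  have hδfa : ∀ p, p ∉ N.dom b → δfun p = δ1 p := by
    intro p hp; rw [hδfundef]; simp [hp]
  have hdu1 : N.ldelayed v u1 := by
    refine ⟨δfun, fun p => ?_, rfl⟩
    by_cases hp : p ∈ N.dom b
    · rw [hδfb p hp]; exact add_nonneg (hδ1 p) (hδ2 p)
    · rw [hδfa p hp]; exact hδ1 p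
  have hu1inl : ∀ z, u1 (.inl z) = v (.inl z) := fun z => rfl
  have hu1b : ∀ p, p ∈ N.dom b → u1 (.inr p) = v2 (.inr p) := by
    intro p hp
    show v (.inr p) + δfun p = _
    rw [hδfb p hp, hv2inr]; ring
  have hu1a : ∀ p, p ∉ N.dom b → u1 (.inr p) = v1 (.inr p) := by
    intro p hp
    show v (.inr p) + δfun p = _
    rw [hδfa p hp, hv1inr]
  -- the new intermediate state and valuation
  set q1' : N.State := fun p => if hp : p ∈ N.dom b then (tb p hp).2.2.2 else q p with hq1'def
  set w1' : N.LVal := N.lreset Rb u1 with hw1'def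
  have hw1'inr : ∀ p, w1' (.inr p) = u1 (.inr p) := fun p => rfl
  have hu1inr : ∀ p, u1 (.inr p) = v (.inr p) + δfun p := fun p => rfl
  have hw1'inl : ∀ z, z ∉ Rb → w1' (.inl z) = u1 (.inl z) := by
    intro z hz
    rw [hw1'def, lreset_inl, if_neg hz]
  have hw1'inlR : ∀ z, z ∈ Rb → w1' (.inl z) = u1 (.inr (N.owner z)) := by
    intro z hz
    rw [hw1'def, lreset_inl, if_pos hz]
  -- step 1 : action b from (q, u1)
  have hstepb : N.lact b (q, u1) (q1', w1') := by
    refine ⟨tb, ?_, ?_, ?_, ?_, rfl⟩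
    · intro p hp
      refine ⟨(hb1 p hp).1, ?_, ?_⟩
      · show (tb p hp).1 = q p
        have e1 : (tb p hp).1 = q1 p := (hb1 p hp).2.1
        have e2 : q1 p = q p := ha2 p (hnba p hp)
        rw [e1]; exact e2
      · show (tb p hp).2.2.2 = q1' p
        rw [hq1'def]; simp [dif_pos hp]
    · intro p hp
      show q1' p = q p
      rw [hq1'def]; simp [dif_neg hp]
    · intro p hp p' hp'
      show u1 (.inr p) = u1 (.inr p')
      rw [hu1b p hp, hu1b p' hp']
      exact hbsync p hp p' hp'
    · intro p hp cc hcc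
      have hown : N.owner cc.1 = p := (N.trans_wf b p _ (hb1 p hp).1).1 cc hcc
      have hsat := hbg p hp cc hcc
      have hccRa : cc.1 ∉ Ra := fun hR => hnab _ (hRa _ hR) (by rw [hown]; exact hp)
      have e1 : u1 (.inr (N.owner cc.1)) = v2 (.inr (N.owner cc.1)) :=
        hu1b _ (by rw [hown]; exact hp)
      have e2 : u1 (.inl cc.1) = v2 (.inl cc.1) := by
        rw [hu1inl, hv2inl_na cc.1 hccRa]
      show Cmp.sat cc.2.1 (u1 (.inr (N.owner cc.1)) - u1 (.inl cc.1)) cc.2.2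
      rw [e1, e2]
      exact hsat
  have hθb' : ∀ p ∈ N.dom b, u1 (.inr p) = θb := by
    intro p hp; rw [hu1b p hp]; exact hθb p hp
  -- step 2 : action a from (q1', w1')
  have hstepa : N.lact a (q1', w1') (q2, N.lreset Ra w1') := by
    refine ⟨ta, ?_, ?_, ?_, ?_, rfl⟩
    · intro p hp
      refine ⟨(ha1 p hp).1, ?_, ?_⟩
      · show (ta p hp).1 = q1' p
        have e1 : (ta p hp).1 = q p := (ha1 p hp).2.1
        rw [e1, hq1'def]; simp [dif_neg (hnab p hp)]
      · show (ta p hp).2.2.2 = q2 p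
        have e1 : (ta p hp).2.2.2 = q1 p := (ha1 p hp).2.2
        have e2 : q2 p = q1 p := hb2 p (hnab p hp)
        rw [e1, e2]
    · intro p hp
      show q2 p = q1' p
      by_cases hpb : p ∈ N.dom b
      · have e1 : (tb p hpb).2.2.2 = q2 p := (hb1 p hpb).2.2
        rw [← e1, hq1'def]; simp [dif_pos hpb]
      · have e1 : q2 p = q1 p := hb2 p hpb
        have e2 : q1 p = q p := ha2 p hp
        rw [e1, e2, hq1'def]; simp [dif_neg hpb]
    · intro p hp p' hp'
      show w1' (.inr p) = w1' (.inr p')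
      rw [hw1'inr, hw1'inr, hu1a p (hnab p hp), hu1a p' (hnab p' hp')]
      exact hasync p hp p' hp'
    · intro p hp cc hcc
      have hown : N.owner cc.1 = p := (N.trans_wf a p _ (ha1 p hp).1).1 cc hcc
      have hsat := hag p hp cc hcc
      have hccRb : cc.1 ∉ Rb := fun hR => hnab _ (by rw [hown]; exact hp) (hRb _ hR)
      have e1 : w1' (.inr (N.owner cc.1)) = v1 (.inr (N.owner cc.1)) := by
        rw [hw1'inr, hu1a _ (hnab _ (by rw [hown]; exact hp))]
      have e2 : w1' (.inl cc.1) = v1 (.inl cc.1) := by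
        rw [hw1'inl cc.1 hccRb, hu1inl, hv1inl]
      show Cmp.sat cc.2.1 (w1' (.inr (N.owner cc.1)) - w1' (.inl cc.1)) cc.2.2
      rw [e1, e2]
      exact hsat
  have hθa' : ∀ p ∈ N.dom a, w1' (.inr p) = θa := by
    intro p hp
    rw [hw1'inr, hu1a p (hnab p hp)]
    exact hθa p hp
  -- the final valuation of the swapped pair is dominated by w2
  have hdel : N.ldelayed (N.lreset Ra w1') w2 := by
    refine ⟨fun p => if p ∈ N.dom b then 0 else δ2 p, fun p => ?_, ?_⟩
    · by_cases hp : p ∈ N.dom b <;> simp [hp, hδ2 p]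
    · have hw2eq : w2 = N.lreset Rb v2 := hbres
      rw [hw2eq]
      funext z
      cases z with
      | inr p =>
        show N.lreset Rb v2 (.inr p) = N.lreset Ra w1' (.inr p)
          + (if p ∈ N.dom b then 0 else δ2 p)
        rw [lreset_inr, lreset_inr, hw1'inr, hu1inr, hv2inr]
        by_cases hp : p ∈ N.dom b
        · rw [hδfb p hp, if_pos hp]; ring
        · rw [hδfa p hp, if_neg hp]
      | inl x =>
        show N.lreset Rb v2 (.inl x) = N.lreset Ra w1' (.inl x)
        by_cases hxa : x ∈ Ra
        · have hxb : x ∉ Rb := fun hxb => hnab _ (hRa _ hxa) (hRb _ hxb)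
          have l1 : N.lreset Rb v2 (.inl x) = v2 (.inl x) := by
            rw [lreset_inl, if_neg hxb]
          have l2 : N.lreset Ra w1' (.inl x) = w1' (.inr (N.owner x)) := by
            rw [lreset_inl, if_pos hxa]
          rw [l1, l2, hw1'inr, hu1a _ (hnab _ (hRa _ hxa)), hv2inl, hw1inlR x hxa]
        · have l2 : N.lreset Ra w1' (.inl x) = w1' (.inl x) := by
            rw [lreset_inl, if_neg hxa]
          by_cases hxb : x ∈ Rb
          · have l1 : N.lreset Rb v2 (.inl x) = v2 (.inr (N.owner x)) := by
              rw [lreset_inl, if_pos hxb]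
            rw [l1, l2, hw1'inlR x hxb, hu1b _ (hRb _ hxb)]
          · have l1 : N.lreset Rb v2 (.inl x) = v2 (.inl x) := by
              rw [lreset_inl, if_neg hxb]
            rw [l1, l2, hw1'inl x hxb, hu1inl, hv2inl_na x hxa]
  have hzero : N.ldelayed w1' w1' :=
    ⟨fun _ => 0, fun _ => le_refl _, by funext z; cases z <;> simp⟩
  exact .cons hdu1 hstepb hθb'
    (.cons hzero hstepa hθa' (lrunT_delay_prepend hdel h2))
/-! ### Equivalence is a congruence for cons -/

lemma equiv_cons (a : N.Act) {u w : List N.Act} (h : N.equiv u w) :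
    N.equiv (a :: u) (a :: w) := by
  induction h with
  | swap u w x y hd => exact .swap (a :: u) w x y hd
  | refl u => exact .refl _
  | trans h1 h2 ih1 ih2 => exact .trans ih1 ih2

/-! ### Sorting a timed run by execution times -/

lemma insertT : ∀ (l : List (N.Act × ℝ)) (c c' : N.State × N.LVal) (x : N.Act × ℝ),
    N.LRunT (x :: l) c c' → l.Pairwise (fun i j => i.2 ≤ j.2) →
    ∃ l', N.LRunT l' c c' ∧ l'.Pairwise (fun i j => i.2 ≤ j.2) ∧ l'.Perm (x :: l) ∧
      N.equiv (l'.map Prod.fst) ((x :: l).map Prod.fst) := by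
  intro l
  induction l with
  | nil =>
    intro c c' x h _
    exact ⟨[x], h, List.pairwise_singleton _ x, .refl _, .refl _⟩
  | cons y t ih =>
    intro c c' x h hsort
    obtain ⟨q, v⟩ := c
    by_cases hxy : x.2 ≤ y.2
    · refine ⟨x :: y :: t, h, ?_, .refl _, .refl _⟩
      rw [List.pairwise_cons]
      refine ⟨?_, hsort⟩
      intro z hz
      rcases List.mem_cons.mp hz with rfl | hz
      · exact hxy
      · exact le_trans hxy ((List.pairwise_cons.mp hsort).1 z hz)
    · have hdisj : Disjoint (N.dom x.1) (N.dom y.1) := by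
        rw [Finset.disjoint_left]
        intro p hpx hpy
        exact hxy (adj_shared h hpx hpy)
      have h' : N.LRunT (y :: x :: t) (q, v) c' := swap_head h hdisj
      obtain ⟨v1, c1, hd1, hb1, hθ1, htail⟩ := lrunT_cons_inv h'
      obtain ⟨l'', hrun'', hsort'', hperm'', hequiv''⟩ :=
        ih c1 c' x htail (List.pairwise_cons.mp hsort).2
      refine ⟨y :: l'', lrunT_cons' hd1 hb1 hθ1 hrun'', ?_, ?_, ?_⟩
      · rw [List.pairwise_cons]
        refine ⟨?_, hsort''⟩
        intro z hz
        rcases List.mem_cons.mp (hperm''.subset hz) with rfl | hz'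
        · exact le_of_not_ge hxy
        · exact (List.pairwise_cons.mp hsort).1 z hz'
      · exact (hperm''.cons y).trans (List.Perm.swap x y t)
      · refine .trans (equiv_cons y.1 hequiv'') ?_
        exact .swap [] (t.map Prod.fst) y.1 x.1 hdisj.symm

lemma sortT : ∀ (l : List (N.Act × ℝ)) (c c' : N.State × N.LVal),
    N.LRunT l c c' →
    ∃ l', N.LRunT l' c c' ∧ l'.Pairwise (fun i j => i.2 ≤ j.2) ∧ l'.Perm l ∧
      N.equiv (l'.map Prod.fst) (l.map Prod.fst) := by
  intro l
  induction l with
  | nil => exact fun c c' h => ⟨[], h, List.Pairwise.nil, .refl _, .refl _⟩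
  | cons x t ih =>
    intro c c' h
    obtain ⟨q, v⟩ := c
    obtain ⟨v1, c1, hd1, hb1, hθ1, htail⟩ := lrunT_cons_inv h
    obtain ⟨t', hrun', hsort', hperm', hequiv'⟩ := ih c1 c' htail
    obtain ⟨l', h1, h2, h3, h4⟩ :=
      insertT t' (q, v) c' x (lrunT_cons' hd1 hb1 hθ1 hrun') hsort'
    exact ⟨l', h1, h2, h3.trans (hperm'.cons x),
      h4.trans (equiv_cons x.1 hequiv')⟩

/-! ### Simulating a sorted timed local run by a global run -/

lemma sim {tu : List (N.Act × ℝ)} {c c' : N.State × N.LVal} (h : N.LRunT tu c c') :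
    ∀ g : N.GVal, tu.Pairwise (fun i j => i.2 ≤ j.2) →
    (∀ x, g (.inl x) = c.2 (.inl x)) → N.IsGVal g →
    (∀ i ∈ tu, g (.inr ()) ≤ i.2 ∧ ∀ p, i.2 ≤ c'.2 (.inr p)) →
    (∀ p, g (.inr ()) ≤ c'.2 (.inr p)) →
    N.GRun (tu.map Prod.fst) (c.1, g) (c'.1, N.toGlobal c'.2) := by
  induction h with
  | @nil q v v' hd =>
    intro g _ h2 _ _ h5
    have hδ : (0:ℝ) ≤ N.toGlobal v' (.inr ()) - g (.inr ()) := by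
      have := h5 ⟨0, N.kpos⟩
      simp only [Network.toGlobal]
      linarith
    have heq : N.toGlobal v' = N.gdelay g (N.toGlobal v' (.inr ()) - g (.inr ())) := by
      funext z
      cases z with
      | inl x =>
        show N.toGlobal v' (.inl x) = g (.inl x)
        show v' (.inl x) = g (.inl x)
        rw [ldelayed_inl hd x, h2 x]
      | inr u =>
        show N.toGlobal v' (.inr u) = g (.inr ()) + (N.toGlobal v' (.inr ()) - g (.inr ()))
        obtain ⟨⟩ := u
        ring
    show N.GRun [] (q, g) (q, N.toGlobal v')
    rw [heq]
    exact .nil _ hδ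
  | @cons b θ u q v v1 c1 c2 hd hb hθ h ih =>
    intro g hsort h2 h3 h4 h5
    have hδ : 0 ≤ θ - g (.inr ()) := by
      have := (h4 (b, θ) (List.mem_cons_self)).1
      linarith
    set g' : N.GVal := N.gdelay g (θ - g (.inr ())) with hg'def
    have hg'inr : g' (.inr ()) = θ := by
      show g (.inr ()) + (θ - g (.inr ())) = θ; ring
    have hg'inl : ∀ x, g' (.inl x) = g (.inl x) := fun x => rfl
    obtain ⟨tr, h1, hnd, hsync, hg, hres⟩ := hb
    set R : Set N.Clock := {x | ∃ p hp, x ∈ (tr p hp).2.2.1} with hRdef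
    have hRo : ∀ x ∈ R, N.owner x ∈ N.dom b := by
      rintro x ⟨p, hp, hxp⟩
      exact ((N.trans_wf b p _ (h1 p hp).1).2 x hxp) ▸ hp
    set g1 : N.GVal := N.greset R g' with hg1def
    have hg1inr : g1 (.inr ()) = θ := hg'inr
    have hg1inlR : ∀ x, x ∈ R → g1 (.inl x) = θ := by
      intro x hx
      rw [hg1def, greset_inl, if_pos hx, hg'inr]
    have hg1inl : ∀ x, x ∉ R → g1 (.inl x) = g (.inl x) := by
      intro x hx
      rw [hg1def, greset_inl, if_neg hx, hg'inl]
    have hvinl : ∀ x, v1 (.inl x) = v (.inl x) := fun x => ldelayed_inl hd x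
    have hc1inr : ∀ p, c1.2 (.inr p) = v1 (.inr p) := by
      intro p; rw [hres]; rfl
    have hc1inlR : ∀ x, x ∈ R → c1.2 (.inl x) = v1 (.inr (N.owner x)) := by
      intro x hx
      rw [hres, lreset_inl, if_pos hx]
    have hc1inl : ∀ x, x ∉ R → c1.2 (.inl x) = v1 (.inl x) := by
      intro x hx
      rw [hres, lreset_inl, if_neg hx]
    have hθnn : 0 ≤ θ := le_trans (h3.1 (.inr ())) (by linarith)
    -- the global action step
    have hgact : N.gact b (q, g') (c1.1, g1) := by
      refine ⟨tr, ?_, hnd, ?_, rfl⟩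
      · intro p hp
        exact ⟨(h1 p hp).1, (h1 p hp).2.1, (h1 p hp).2.2⟩
      · intro p hp cc hcc
        have hown : N.owner cc.1 = p := (N.trans_wf b p _ (h1 p hp).1).1 cc hcc
        have hsat := hg p hp cc hcc
        have e1 : v1 (.inr (N.owner cc.1)) = θ := by rw [hown]; exact hθ p hp
        have e2 : g' (.inl cc.1) = v1 (.inl cc.1) := by
          rw [hg'inl, h2, hvinl]
        show Cmp.sat cc.2.1 (g' (.inr ()) - g' (.inl cc.1)) cc.2.2
        rw [hg'inr, e2, ← e1]
        exact hsat
    -- apply the induction hypothesis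
    have hrest := ih g1 (List.pairwise_cons.mp hsort).2
      (by
        intro x
        by_cases hx : x ∈ R
        · rw [hg1inlR x hx, hc1inlR x hx]
          exact ((hθ _ (hRo x hx)).symm)
        · rw [hg1inl x hx, hc1inl x hx, h2, hvinl])
      (by
        constructor
        · intro z
          cases z with
          | inl x =>
            by_cases hx : x ∈ R
            · rw [hg1inlR x hx]; exact hθnn
            · rw [hg1inl x hx]; exact h3.1 (.inl x)
          | inr u => obtain ⟨⟩ := u; rw [hg1inr]; exact hθnn
        · intro x
          rw [hg1inr]
          by_cases hx : x ∈ R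
          · rw [hg1inlR x hx]
          · rw [hg1inl x hx]
            exact le_trans (h3.2 x) (by linarith))
      (by
        intro i hi
        refine ⟨?_, (h4 i (List.mem_cons_of_mem _ hi)).2⟩
        rw [hg1inr]
        exact (List.pairwise_cons.mp hsort).1 i hi)
      (by
        intro p
        rw [hg1inr]
        exact (h4 (b, θ) (List.mem_cons_self)).2 p)
    show N.GRun (b :: u.map Prod.fst) (q, g) (c2.1, N.toGlobal c2.2)
    exact .cons (θ - g (.inr ())) hδ hgact hrest

end Network
theorem stmt4 (N : Network) (u : List N.Act) (q q' : N.State) (v v' : N.LVal)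
    (hv : N.IsLVal v) (hs : N.Synchronized v) (hs' : N.Synchronized v')
    (hr : N.LRun u (q, v) (q', v')) :
    ∃ w, N.equiv w u ∧ N.GRun w (q, N.toGlobal v) (q', N.toGlobal v') := by
  obtain ⟨tu, htu, hT, hbnd⟩ := Network.lrun_toT hr
  obtain ⟨tu', hrun', hsort', hperm', hequiv'⟩ := Network.sortT tu (q, v) (q', v') hT
  refine ⟨tu'.map Prod.fst, by rwa [htu] at hequiv', ?_⟩
  have hmain := Network.sim hrun' (N.toGlobal v) hsort' (fun x => rfl) ?_ ?_ ?_
  · exact hmain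
  · constructor
    · intro z
      cases z with
      | inl x => exact hv.1 _
      | inr u => exact hv.1 _
    · intro x
      show v (.inl x) ≤ v (.inr ⟨0, N.kpos⟩)
      calc v (.inl x) ≤ v (.inr (N.owner x)) := hv.2 x
      _ = v (.inr ⟨0, N.kpos⟩) := hs _ _
  · intro i hi
    obtain ⟨p, hpl, hpr⟩ := hbnd i (hperm'.subset hi)
    constructor
    · show v (.inr ⟨0, N.kpos⟩) ≤ i.2
      rw [hs ⟨0, N.kpos⟩ p]
      exact hpl
    · intro p'
      show i.2 ≤ v' (.inr p')
      rw [← hs' p p']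
      exact hpr
  · intro p
    show v (.inr ⟨0, N.kpos⟩) ≤ v' (.inr p)
    rw [hs ⟨0, N.kpos⟩ p]
    exact Network.lrunT_mono hT p
end

section
/- If (q,v) -u-> (q',v') is a global run, then (q, local(v)) =u=> (q', local(v')) is a local run, where local(v) is the synchronized local valuation corresponding to v. -/
open Classical

theorem stmt5 (N : Network) (u : List N.Act) (q q' : N.State) (v v' : N.GVal)
    (hr : N.GRun u (q, v) (q', v')) :
    N.LRun u (q, N.toLocal v) (q', N.toLocal v') := by
  have hdel : ∀ (w : N.GVal) (δ : ℝ), 0 ≤ δ →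
      N.ldelayed (N.toLocal w) (N.toLocal (N.gdelay w δ)) := by
    intro w δ hδ
    refine ⟨fun _ => δ, fun _ => hδ, ?_⟩
    funext y; cases y <;> rfl
  have hact : ∀ (b : N.Act) (qa : N.State) (w : N.GVal) (c1 : N.State × N.GVal),
      N.gact b (qa, w) c1 → N.lact b (qa, N.toLocal w) (c1.1, N.toLocal c1.2) := by
    intro b qa w c1 ⟨tr, h1, h2, h3, h4⟩
    refine ⟨tr, h1, h2, fun p _ p' _ => rfl, ?_, ?_⟩
    · intro p h c hc
      exact h3 p h c hc
    · rw [h4]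
      funext y; cases y <;> simp [Network.toLocal, Network.lreset, Network.greset]
  suffices H : ∀ (u : List N.Act) (c c' : N.State × N.GVal), N.GRun u c c' →
      N.LRun u (c.1, N.toLocal c.2) (c'.1, N.toLocal c'.2) from H u (q, v) (q', v') hr
  intro u c c' hr
  induction hr with
  | nil δ hδ => exact Network.LRun.nil (hdel _ δ hδ)
  | cons δ hδ hb h ih =>
    exact Network.LRun.cons (hdel _ δ hδ) (hact _ _ _ _ hb) ih
end

section
/- Pre property of local zone transitions: if (q,v) =u=> (q',v') is a local run and v ∈ Z for a time-elapsed local zone Z, then there is a local zone transition sequence (q,Z) =u=> (q',Z') with v' ∈ Z'. -/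
open Classical

lemma ldelayed_refl_s9 (N : Network) (v : N.LVal) : N.ldelayed v v := by
  refine ⟨fun _ => 0, fun _ => le_refl 0, ?_⟩
  funext y; cases y <;> simp

lemma ldelayed_trans (N : Network) {v1 v2 v3 : N.LVal}
    (h12 : N.ldelayed v1 v2) (h23 : N.ldelayed v2 v3) : N.ldelayed v1 v3 := by
  obtain ⟨δ, hδ, hv⟩ := h12
  obtain ⟨δ', hδ', hv'⟩ := h23
  refine ⟨fun p => δ p + δ' p, fun p => add_nonneg (hδ p) (hδ' p), ?_⟩
  subst hv'; subst hv
  funext y; cases y <;> simp [add_assoc]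

lemma lelapse_idem (N : Network) (S : Set N.LVal) :
    N.lelapse S = N.lelapse (N.lelapse S) := by
  ext w; constructor
  · rintro ⟨v, hv, hd⟩
    exact ⟨w, ⟨v, hv, hd⟩, ldelayed_refl_s9 N w⟩
  · rintro ⟨v1, ⟨v0, hv0, hd0⟩, hd1⟩
    exact ⟨v0, hv0, ldelayed_trans N hd0 hd1⟩

lemma mem_lelapse_self (N : Network) {S : Set N.LVal} {v : N.LVal} (h : v ∈ S) :
    v ∈ N.lelapse S := ⟨v, h, ldelayed_refl_s9 N v⟩

lemma stmt9_aux (N : Network) :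
    ∀ (u : List N.Act) (c c' : N.State × N.LVal), N.LRun u c c' →
    ∀ Z : Set N.LVal, c.2 ∈ Z → Z = N.lelapse Z →
    ∃ Z', N.LZRun u (c.1, Z) (c'.1, Z') ∧ c'.2 ∈ Z' := by
  intro u c c' hr
  induction hr with
  | @nil q v v' hd =>
    intro Z hv hte
    refine ⟨Z, .nil _, ?_⟩
    rw [hte]
    exact ⟨v, hv, hd⟩
  | @cons b u q v v1 c1 c2 hd hb h ih =>
    intro Z hv hte
    have hv1 : v1 ∈ Z := by rw [hte]; exact ⟨v, hv, hd⟩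
    obtain ⟨tr, htr, hout, hsync, hg, hreset⟩ := hb
    set R : Set N.Clock := {x | ∃ p h, x ∈ (tr p h).2.2.1} with hR
    set Z1 : Set N.LVal := N.lelapse ((N.lreset R) ''
      (Z ∩ {w | ∀ p (h : p ∈ N.dom b), N.lgsat w (tr p h).2.1}
         ∩ {w | ∀ p ∈ N.dom b, ∀ p' ∈ N.dom b, w (.inr p) = w (.inr p')})) with hZ1
    have hmem : c1.2 ∈ Z1 := by
      rw [hZ1]
      apply mem_lelapse_self
      exact ⟨v1, ⟨⟨hv1, hg⟩, hsync⟩, hreset.symm⟩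
    have hstep : N.lzstep b (q, Z) (c1.1, Z1) :=
      ⟨tr, htr, hout, rfl, ⟨c1.2, hmem⟩⟩
    obtain ⟨Z', hrun, hmem'⟩ := ih Z1 hmem (lelapse_idem N _)
    exact ⟨Z', .cons hstep hrun, hmem'⟩

theorem stmt9 (N : Network) (u : List N.Act) (q q' : N.State) (v v' : N.LVal)
    (Z : Set N.LVal) (hZ : N.IsLZone Z) (hte : Z = N.lelapse Z) (hv : v ∈ Z)
    (hr : N.LRun u (q, v) (q', v')) :
    ∃ Z', N.LZRun u (q, Z) (q', Z') ∧ v' ∈ Z' :=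
  stmt9_aux N u (q, v) (q', v') hr Z hv hte
end
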